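/- arXiv:2107.09774 — 3 statements merged into one kernel-verified Lean document; each statement's English description precedes it below -/
import Mathlib

section
/- The number of lattice paths from (0,0) to (M,N) with steps (1,1) and (-1,1) that never visit any point with x-coordinate less than 0 equals binom(N,(N-M)/2) - binom(N,(N-M)/2 - 1), for M ≥ 0, N ≥ M, and N ≡ M mod 2. -/
open Finset

/-- The x-coordinate after the first `k` steps of a path encoded by `s : Fin N → Bool`
(`true` = step `(x,y) → (x+1,y+1)`, `false` = step `(x,y) → (x-1,y+1)`), starting at `x = 0`. -/
def pathPos {N : ℕ} (s : Fin N → Bool) (k : ℕ) : ℤ :=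
  ∑ i ∈ Finset.univ.filter (fun i : Fin N => (i : ℕ) < k), (if s i then (1 : ℤ) else -1)

/-- Binomial coefficient `binom n k` with integer lower argument, `0` out of range. -/
def ibinom (n : ℕ) (k : ℤ) : ℤ :=
  if 0 ≤ k then (n.choose k.toNat : ℤ) else 0

lemma pathPos_zero {N : ℕ} (s : Fin N → Bool) : pathPos s 0 = 0 := by
  simp [pathPos]

lemma pathPos_succ {N : ℕ} (s : Fin N → Bool) (k : ℕ) :
    pathPos s (k+1) = pathPos s k +
      (if h : k < N then (if s ⟨k, h⟩ then (1:ℤ) else -1) else 0) := by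
  unfold pathPos
  rw [Finset.sum_filter, Finset.sum_filter]
  have key : ∀ i : Fin N,
      (if (i:ℕ) < k+1 then (if s i then (1:ℤ) else -1) else 0)
      = (if (i:ℕ) < k then (if s i then (1:ℤ) else -1) else 0)
        + (if (i:ℕ) = k then (if s i then (1:ℤ) else -1) else 0) := by
    intro i
    set x : ℤ := if s i then (1:ℤ) else -1 with hx
    by_cases h1 : (i:ℕ) < k
    · rw [if_pos (by omega), if_pos h1, if_neg (by omega)]; ring
    · by_cases h2 : (i:ℕ) = k
      · rw [if_pos (by omega), if_neg h1, if_pos h2]; ring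
      · rw [if_neg (by omega), if_neg h1, if_neg h2]; ring
  rw [Finset.sum_congr rfl (fun i _ => key i), Finset.sum_add_distrib]
  congr 1
  by_cases h : k < N
  · rw [dif_pos h]
    have h2 : ∀ i : Fin N,
        (if (i:ℕ) = k then (if s i then (1:ℤ) else -1) else 0)
        = (if i = ⟨k, h⟩ then (if s i then (1:ℤ) else -1) else 0) := by
      intro i
      congr 1
      simp [Fin.ext_iff]
    rw [Finset.sum_congr rfl (fun i _ => h2 i)]
    simp
  · rw [dif_neg h]
    apply Finset.sum_eq_zero
    intro i _
    rw [if_neg (by have := i.isLt; omega)]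

lemma pathPos_stable {N : ℕ} (s : Fin N → Bool) (k : ℕ) (hk : N ≤ k) :
    pathPos s k = pathPos s N := by
  induction k with
  | zero => have : N = 0 := by omega
            subst this; rfl
  | succ k ih =>
    rcases Nat.lt_or_ge N (k+1) with h | h
    · have hNk : N ≤ k := by omega
      rw [pathPos_succ, dif_neg (by omega), add_zero, ih hNk]
    · have : N = k + 1 := by omega
      subst this
      rfl

lemma pathPos_le {N : ℕ} (s : Fin N → Bool) (k : ℕ) : pathPos s k ≤ k := by
  induction k with
  | zero => simp [pathPos_zero]
  | succ k ih =>
    rw [pathPos_succ]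
    push_cast
    split_ifs <;> omega

lemma pathPos_init {N : ℕ} (s : Fin (N+1) → Bool) (k : ℕ) (hk : k ≤ N) :
    pathPos (Fin.init s) k = pathPos s k := by
  induction k with
  | zero => rw [pathPos_zero, pathPos_zero]
  | succ k ih =>
    rw [pathPos_succ, pathPos_succ, ih (by omega),
      dif_pos (show k < N by omega), dif_pos (show k < N+1 by omega)]
    rfl

lemma pathPos_last {N : ℕ} (s : Fin (N+1) → Bool) :
    pathPos s (N+1) = pathPos (Fin.init s) N + (if s (Fin.last N) then (1:ℤ) else -1) := by
  rw [pathPos_succ, dif_pos (Nat.lt_succ_self N), pathPos_init s N le_rfl]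
  rfl

/-- condition transfer -/
lemma cond_iff {N : ℕ} (M : ℤ) (hM : 0 ≤ M) (s : Fin (N+1) → Bool) :
    (pathPos s (N+1) = M ∧ ∀ k : ℕ, 0 ≤ pathPos s k) ↔
    (pathPos (Fin.init s) N = M - (if s (Fin.last N) then (1:ℤ) else -1) ∧
      ∀ k : ℕ, 0 ≤ pathPos (Fin.init s) k) := by
  constructor
  · rintro ⟨h1, h2⟩
    have hfin : pathPos (Fin.init s) N = M - (if s (Fin.last N) then (1:ℤ) else -1) := by
      rw [pathPos_last] at h1; omega
    refine ⟨hfin, fun k => ?_⟩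
    rcases le_or_gt k N with h | h
    · rw [pathPos_init s k h]; exact h2 k
    · rw [pathPos_stable _ k (by omega), pathPos_init s N le_rfl]
      exact h2 N
  · rintro ⟨h1, h2⟩
    have hfin : pathPos s (N+1) = M := by
      rw [pathPos_last]; omega
    refine ⟨hfin, fun k => ?_⟩
    rcases le_or_gt k N with h | h
    · rw [← pathPos_init s k h]; exact h2 k
    · rw [pathPos_stable _ k (by omega), pathPos_last, h1]; omega

noncomputable def count (N : ℕ) (M : ℤ) : ℕ :=
  Nat.card {s : Fin N → Bool // pathPos s N = M ∧ ∀ k : ℕ, 0 ≤ pathPos s k}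

lemma count_neg {N : ℕ} {M : ℤ} (hM : M < 0) : count N M = 0 := by
  have : IsEmpty {s : Fin N → Bool // pathPos s N = M ∧ ∀ k : ℕ, 0 ≤ pathPos s k} := by
    refine ⟨fun ⟨s, h1, h2⟩ => ?_⟩
    have := h2 N
    omega
  exact Nat.card_of_isEmpty

lemma count_gt {N : ℕ} {M : ℤ} (hM : (N:ℤ) < M) : count N M = 0 := by
  have : IsEmpty {s : Fin N → Bool // pathPos s N = M ∧ ∀ k : ℕ, 0 ≤ pathPos s k} := by
    refine ⟨fun ⟨s, h1, h2⟩ => ?_⟩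
    have := pathPos_le s N
    omega
  exact Nat.card_of_isEmpty

lemma count_zero_zero : count 0 0 = 1 := by
  have hu : Unique {s : Fin 0 → Bool // pathPos s 0 = 0 ∧ ∀ k : ℕ, 0 ≤ pathPos s k} := by
    refine ⟨⟨⟨fun i => i.elim0, ?_, fun k => ?_⟩⟩, ?_⟩
    · exact pathPos_zero _
    · have : pathPos (fun i : Fin 0 => i.elim0) k = 0 := by
        simp [pathPos]
      omega
    · rintro ⟨s, h⟩
      apply Subtype.ext
      funext i
      exact i.elim0
  exact Nat.card_unique

/-- the splitting equivalence -/
def splitEquiv (N : ℕ) (M : ℤ) (hM : 0 ≤ M) :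
    {s : Fin (N+1) → Bool // pathPos s (N+1) = M ∧ ∀ k : ℕ, 0 ≤ pathPos s k} ≃
    ({t : Fin N → Bool // pathPos t N = M - 1 ∧ ∀ k : ℕ, 0 ≤ pathPos t k} ⊕
     {t : Fin N → Bool // pathPos t N = M + 1 ∧ ∀ k : ℕ, 0 ≤ pathPos t k}) where
  toFun := fun ⟨s, h⟩ =>
    if hb : s (Fin.last N) = true then
      Sum.inl ⟨Fin.init s, by
        have := (cond_iff M hM s).mp h
        rwa [hb, if_pos rfl] at this⟩
    else
      Sum.inr ⟨Fin.init s, by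
        have := (cond_iff M hM s).mp h
        rw [Bool.not_eq_true] at hb
        rw [hb] at this
        simpa using this⟩
  invFun := Sum.elim
    (fun ⟨t, h⟩ => ⟨Fin.snoc t true, by
      refine (cond_iff M hM _).mpr ?_
      rw [Fin.init_snoc, Fin.snoc_last, if_pos rfl]
      exact h⟩)
    (fun ⟨t, h⟩ => ⟨Fin.snoc t false, by
      refine (cond_iff M hM _).mpr ?_
      rw [Fin.init_snoc, Fin.snoc_last]
      simpa using h⟩)
  left_inv := by
    rintro ⟨s, h⟩
    by_cases hb : s (Fin.last N) = true
    · simp only [dif_pos hb, Sum.elim_inl]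
      apply Subtype.ext
      simp only
      rw [← hb, Fin.snoc_init_self]
    · simp only [dif_neg hb, Sum.elim_inr]
      apply Subtype.ext
      simp only
      rw [Bool.not_eq_true] at hb
      rw [← hb, Fin.snoc_init_self]
  right_inv := by
    rintro (⟨t, h⟩ | ⟨t, h⟩)
    · simp only [Sum.elim_inl]
      simp only [Fin.snoc_last, eq_self_iff_true, ↓reduceDIte]
      congr 1
      apply Subtype.ext
      simp only
      rw [Fin.init_snoc]
    · simp only [Sum.elim_inr]
      simp only [Fin.snoc_last, Bool.false_eq_true, ↓reduceDIte]
      congr 1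
      apply Subtype.ext
      simp only
      rw [Fin.init_snoc]

lemma count_succ (N : ℕ) (M : ℤ) (hM : 0 ≤ M) :
    count (N+1) M = count N (M - 1) + count N (M + 1) := by
  unfold count
  rw [Nat.card_congr (splitEquiv N M hM), Nat.card_sum]

/- ibinom lemmas -/
lemma ibinom_neg {n : ℕ} {k : ℤ} (hk : k < 0) : ibinom n k = 0 := by
  rw [ibinom, if_neg (by omega)]

lemma ibinom_pascal (n : ℕ) (k : ℤ) :
    ibinom (n+1) k = ibinom n k + ibinom n (k-1) := by
  rcases lt_trichotomy k 0 with h | h | h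
  · rw [ibinom_neg h, ibinom_neg h, ibinom_neg (by omega)]; ring
  · subst h
    norm_num [ibinom]
  · obtain ⟨m, rfl⟩ : ∃ m : ℕ, k = (m:ℤ) + 1 := ⟨(k-1).toNat, by omega⟩
    rw [ibinom, ibinom, ibinom, if_pos (by omega), if_pos (by omega), if_pos (by omega)]
    have h1 : ((m:ℤ)+1).toNat = m + 1 := by omega
    have h2 : ((m:ℤ)+1-1).toNat = m := by omega
    rw [h1, h2, Nat.choose_succ_succ']
    push_cast
    ring

lemma ibinom_symm {n : ℕ} {k : ℤ} (h : 2*k = (n:ℤ) + 1) : ibinom n k = ibinom n (k-1) := by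
  have hk1 : 1 ≤ k := by omega
  rw [ibinom, ibinom, if_pos (by omega), if_pos (by omega)]
  have h1 : k.toNat ≤ n := by omega
  have h2 : n - k.toNat = (k-1).toNat := by omega
  rw [← Nat.choose_symm h1, h2]

lemma main_count : ∀ N : ℕ, ∀ j : ℤ,
    (count N ((N:ℤ) - 2*j) : ℤ) =
      if 2*j ≤ (N:ℤ) then ibinom N j - ibinom N (j-1) else 0 := by
  intro N
  induction N with
  | zero =>
    intro j
    rcases lt_trichotomy j 0 with h | h | h
    · rw [if_pos (by omega), ibinom_neg h, ibinom_neg (by omega),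
        count_gt (by omega)]
      norm_num
    · subst h
      rw [if_pos (by norm_num)]
      norm_num [count_zero_zero, ibinom_neg (show (0:ℤ)-1 < 0 by norm_num), ibinom]
    · rw [if_neg (by omega), count_neg (by omega)]
      norm_num
  | succ N ih =>
    intro j
    rcases Nat.lt_or_ge (N+1) (2*j).toNat with hcase | hcase
    · -- M < 0
      rw [if_neg (by omega), count_neg (by omega)]
      norm_num
    · -- M ≥ 0
      have hM : 0 ≤ ((N:ℤ)+1) - 2*j := by omega
      have hMeq : ((N+1:ℕ):ℤ) - 2*j = ((N:ℤ)+1) - 2*j := by push_cast; ring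
      rw [hMeq, if_pos (by omega), count_succ N _ hM]
      have e1 : (N:ℤ) + 1 - 2*j - 1 = (N:ℤ) - 2*j := by ring
      have e2 : (N:ℤ) + 1 - 2*j + 1 = (N:ℤ) - 2*(j-1) := by ring
      rw [e1, e2]
      push_cast
      rw [ih j, ih (j-1)]
      rw [ibinom_pascal, ibinom_pascal]
      rcases le_or_gt (2*j).toNat N with h2j | h2j
      · rw [if_pos (by omega), if_pos (by omega)]
        ring
      · -- 2*j = N+1
        have h2j' : 2*j = (N:ℤ) + 1 := by omega
        rw [if_neg (by omega), if_pos (by omega), ibinom_symm h2j']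
        ring

/-- The number of lattice paths from `(0,0)` to `(M,N)` never visiting `x < 0`
equals `binom N ((N-M)/2) - binom N ((N-M)/2 - 1)`. -/
theorem wall_path_count (M N : ℕ) (h1 : M ≤ N) (h2 : N % 2 = M % 2) :
    (Nat.card {s : Fin N → Bool //
        pathPos s N = M ∧ ∀ k : ℕ, 0 ≤ pathPos s k} : ℤ) =
      ibinom N (((N : ℤ) - M) / 2) - ibinom N (((N : ℤ) - M) / 2 - 1) := by
  set j : ℤ := ((N:ℤ) - M) / 2 with hj
  have hdvd : (2:ℤ) ∣ ((N:ℤ) - M) := by omega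
  have hjj : 2 * j = (N:ℤ) - M := Int.mul_ediv_cancel' hdvd
  have hM : (M:ℤ) = (N:ℤ) - 2*j := by omega
  have := main_count N j
  rw [if_pos (by omega)] at this
  calc (Nat.card {s : Fin N → Bool //
        pathPos s N = M ∧ ∀ k : ℕ, 0 ≤ pathPos s k} : ℤ)
      = (count N ((N:ℤ) - 2*j) : ℤ) := by rw [count, ← hM]
    _ = ibinom N j - ibinom N (j-1) := this
end

section
/- For d > 0 and M ≥ d with N ≡ M mod 2, the weighted number of lattice paths from (0,0) to (M,N), where steps are (1,1) and (-1,1), the step (d,y)→(d-1,y+1) is forbidden, the step (d+1,y)→(d,y+1) has weight 2, all other steps have weight 1, and the weight of a path is the product of its step weights, equals binom(N,(N-M)/2). -/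
open Finset

/-- The weight of a path: the product over its steps of the weight of each step, where the
weight of a step depends on the position `x` where it starts and its direction `b`. -/
def pathWeight {N : ℕ} (w : ℤ → Bool → ℤ) (s : Fin N → Bool) : ℤ :=
  ∏ i : Fin N, w (pathPos s i.val) (s i)

noncomputable def g (N : ℕ) (x : ℤ) : ℤ :=
  if ((N : ℤ) - x) % 2 = 0 then ibinom N (((N : ℤ) - x) / 2) else 0

lemma ibinom_succ (N : ℕ) (k : ℤ) :
    ibinom (N+1) k = ibinom N k + ibinom N (k-1) := by
  unfold ibinom
  rcases lt_trichotomy k 0 with h | h | h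
  · simp [not_le.mpr h, not_le.mpr (by omega : k - 1 < 0), not_le.mpr (by omega : k < 1)]
  · subst h; simp
  · have h1 : (0:ℤ) ≤ k := le_of_lt h
    have h2 : (0:ℤ) ≤ k - 1 := by omega
    rw [if_pos h1, if_pos h1, if_pos h2]
    have : k.toNat = (k-1).toNat + 1 := by omega
    rw [this, Nat.choose_succ_succ]
    push_cast; ring

lemma g_pascal (N : ℕ) (x : ℤ) : g (N+1) x = g N (x-1) + g N (x+1) := by
  unfold g
  have e1 : ((N:ℤ) - (x-1)) = ((N:ℤ)+1) - x := by ring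
  by_cases h : (((N:ℤ)+1) - x) % 2 = 0
  · have h2 : ((N:ℤ) - (x+1)) % 2 = 0 := by omega
    rw [if_pos (by push_cast; omega), if_pos (by omega), if_pos h2]
    have e2 : ((N:ℤ) - (x+1)) / 2 = (((N:ℤ)+1) - x) / 2 - 1 := by omega
    have e3 : ((N:ℤ) - (x-1)) / 2 = (((N:ℤ)+1) - x) / 2 := by omega
    have e4 : (((N:ℕ):ℤ)+1) - x = ((N+1:ℕ):ℤ) - x := by push_cast; ring
    rw [e2, e3, ← e4, ibinom_succ]
  · rw [if_neg (by push_cast; omega), if_neg (by omega), if_neg (by omega)]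
    simp

lemma g_zero (x : ℤ) : g 0 x = if x = 0 then 1 else 0 := by
  unfold g ibinom
  rcases eq_or_ne x 0 with h | h
  · subst h; simp
  · rw [if_neg h]
    push_cast
    by_cases hp : ((0:ℤ) - x) % 2 = 0
    · rw [if_pos hp]
      by_cases hs : (0:ℤ) ≤ (0 - x)/2
      · rw [if_pos hs]
        have : ((0 - x)/2).toNat ≠ 0 := by omega
        rw [Nat.choose_eq_zero_of_lt (by omega)]
        simp
      · rw [if_neg hs]
    · rw [if_neg hp]

lemma pathPos_snoc {N : ℕ} (s : Fin N → Bool) (b : Bool) (k : ℕ) :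
    pathPos (Fin.snoc s b) k =
      pathPos s k + (if N < k then (if b then (1:ℤ) else -1) else 0) := by
  unfold pathPos
  rw [Finset.sum_filter, Finset.sum_filter, Fin.sum_univ_castSucc]
  simp [Fin.snoc_castSucc, Fin.snoc_last]

lemma pathPos_snoc_le {N : ℕ} (s : Fin N → Bool) (b : Bool) (k : ℕ) (hk : k ≤ N) :
    pathPos (Fin.snoc s b) k = pathPos s k := by
  rw [pathPos_snoc, if_neg (by omega), add_zero]

lemma pathWeight_snoc {N : ℕ} (w : ℤ → Bool → ℤ) (s : Fin N → Bool) (b : Bool) :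
    pathWeight w (Fin.snoc s b) = pathWeight w s * w (pathPos s N) b := by
  unfold pathWeight
  rw [Fin.prod_univ_castSucc]
  congr 1
  · apply Finset.prod_congr rfl
    intro i _
    rw [Fin.snoc_castSucc, Fin.coe_castSucc, pathPos_snoc_le _ _ _ (le_of_lt i.isLt)]
  · rw [Fin.snoc_last, Fin.val_last, pathPos_snoc_le _ _ _ le_rfl]

lemma adm_snoc {N : ℕ} (d : ℤ) (s : Fin N → Bool) (b : Bool) :
    (∀ i : Fin (N+1), pathPos (Fin.snoc s b) i.val = d → (Fin.snoc s b : Fin (N+1) → Bool) i = true) ↔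
      ((∀ i : Fin N, pathPos s i.val = d → s i = true) ∧ (pathPos s N = d → b = true)) := by
  constructor
  · intro h
    refine ⟨fun i hi => ?_, fun hN => ?_⟩
    · have := h i.castSucc (by
        rw [Fin.coe_castSucc, pathPos_snoc_le _ _ _ (le_of_lt i.isLt)]; exact hi)
      rwa [Fin.snoc_castSucc] at this
    · have := h (Fin.last N) (by
        rw [Fin.val_last, pathPos_snoc_le _ _ _ le_rfl]; exact hN)
      rwa [Fin.snoc_last] at this
  · rintro ⟨h1, h2⟩ i
    refine Fin.lastCases ?_ ?_ i
    · intro hi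
      rw [Fin.snoc_last]
      apply h2
      rwa [Fin.val_last, pathPos_snoc_le _ _ _ le_rfl] at hi
    · intro j hj
      rw [Fin.snoc_castSucc]
      apply h1
      rwa [Fin.coe_castSucc, pathPos_snoc_le _ _ _ (le_of_lt j.isLt)] at hj

open Classical in
noncomputable def F (d : ℤ) (N : ℕ) (x : ℤ) : ℤ :=
  ∑ s ∈ Finset.univ.filter (fun s : Fin N → Bool =>
      pathPos s N = x ∧ ∀ i : Fin N, pathPos s i.val = d → s i = true),
    pathWeight (fun x b => if x = d + 1 ∧ b = false then 2 else 1) s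

lemma F_zero (d x : ℤ) : F d 0 x = if x = 0 then 1 else 0 := by
  classical
  unfold F pathWeight pathPos
  rw [Finset.sum_filter]
  rw [Fintype.sum_eq_single (fun i : Fin 0 => true) (by intro y hy; exact absurd (funext fun i => i.elim0) hy)]
  simp [eq_comm]

lemma sum_snoc_reindex (N : ℕ) (f : (Fin (N+1) → Bool) → ℤ) :
    ∑ y : Fin (N+1) → Bool, f y = ∑ s : Fin N → Bool, ∑ b : Bool, f (Fin.snoc s b) := by
  rw [← Equiv.sum_comp (Fin.snocEquiv (fun _ => Bool)) f, Fintype.sum_prod_type]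
  rw [Finset.sum_comm]
  rfl

lemma pathPos_of_le {N : ℕ} (s : Fin N → Bool) (k : ℕ) (h : N ≤ k) :
    pathPos s k = pathPos s N := by
  unfold pathPos
  rw [Finset.filter_true_of_mem (fun i _ => lt_of_lt_of_le i.isLt h),
    Finset.filter_true_of_mem (fun i _ => i.isLt)]

lemma F_succ (d : ℤ) (N : ℕ) (x : ℤ) :
    F d (N+1) x = F d N (x-1) +
      (if x = d - 1 then 0 else if x = d then 2 else 1) * F d N (x+1) := by
  classical
  unfold F
  rw [Finset.sum_filter, Finset.sum_filter, Finset.sum_filter, Finset.mul_sum]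
  rw [sum_snoc_reindex]
  rw [← Finset.sum_add_distrib]
  apply Finset.sum_congr rfl
  intro s _
  have pT : pathPos (Fin.snoc s true) (N+1) = pathPos s N + 1 := by
    rw [pathPos_snoc, pathPos_of_le s _ (Nat.le_succ N)]; simp
  have pF : pathPos (Fin.snoc s false) (N+1) = pathPos s N + (-1) := by
    rw [pathPos_snoc, pathPos_of_le s _ (Nat.le_succ N)]; simp
  rw [Fintype.sum_bool, pathWeight_snoc, pathWeight_snoc]
  simp only [pT, pF, adm_snoc]
  by_cases hA : ∀ i : Fin N, pathPos s i.val = d → s i = true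
  · simp only [eq_true hA, and_true, true_and]
    set p := pathPos s N with hp
    set W := pathWeight (fun x b => if x = d + 1 ∧ b = false then 2 else 1) s with hW
    clear_value p W
    simp only [Bool.true_eq_false, and_false, if_false, and_true, Bool.false_eq_true,
      implies_true, if_true]
    split_ifs <;> first | ring1 | omega |
      (obtain ⟨h1', h2'⟩ := ‹p + -1 = x ∧ (p = d → False)›; have h3' : ¬ p = d := h2'; omega)
  · simp [hA]

lemma F_eq (d : ℤ) (hd : 0 < d) (N : ℕ) (x : ℤ) :
    F d N x = if d ≤ x then g N x else g N x - g N (2*d - x) := by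
  induction N generalizing x with
  | zero =>
    rw [F_zero]
    simp only [g_zero]
    split_ifs <;> omega
  | succ N ih =>
    rw [F_succ, ih, ih]
    have e1 : 2*d - (x-1) = 2*d - x + 1 := by ring
    have e2 : 2*d - (x+1) = 2*d - x - 1 := by ring
    rw [e1, e2]
    rcases eq_or_ne x d with hx | hx
    · rw [hx]
      simp only [g_pascal]
      ring_nf
      split_ifs <;> first | ring1 | (exfalso; omega)
    · rcases eq_or_ne x (d-1) with hx1 | hx1
      · rw [hx1]
        simp only [g_pascal]
        ring_nf
        split_ifs <;> first | ring1 | (exfalso; omega)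
      · simp only [g_pascal]
        ring_nf
        split_ifs <;> first | ring1 | (exfalso; omega)

/-- For `d > 0` and `M ≥ d`, the weighted number of lattice paths from `(0,0)` to `(M,N)` with a
type-1 filter at `x = d` (step `(d,y)→(d-1,y+1)` forbidden, step `(d+1,y)→(d,y+1)` of weight 2,
all other steps of weight 1) equals `binom N ((N-M)/2)`. -/
theorem filter_type1_right_weighted_count (d M : ℤ) (N : ℕ) (hd : 0 < d) (hM : d ≤ M)
    (h2 : (N : ℤ) ≡ M [ZMOD 2]) :
    (∑ᶠ s ∈ {s : Fin N → Bool |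
        pathPos s N = M ∧ ∀ i : Fin N, pathPos s i.val = d → s i = true},
      pathWeight (fun x b => if x = d + 1 ∧ b = false then 2 else 1) s) =
      ibinom N (((N : ℤ) - M) / 2) := by
  classical
  have hset : {s : Fin N → Bool |
      pathPos s N = M ∧ ∀ i : Fin N, pathPos s i.val = d → s i = true}
      = ↑(Finset.univ.filter (fun s : Fin N → Bool =>
        pathPos s N = M ∧ ∀ i : Fin N, pathPos s i.val = d → s i = true)) := by
    ext s; simp
  rw [hset, finsum_mem_coe_finset]
  have hF : (∑ s ∈ Finset.univ.filter (fun s : Fin N → Bool =>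
      pathPos s N = M ∧ ∀ i : Fin N, pathPos s i.val = d → s i = true),
      pathWeight (fun x b => if x = d + 1 ∧ b = false then 2 else 1) s) = F d N M := by
    unfold F
    apply Finset.sum_congr _ (fun _ _ => rfl)
    ext s
    simp
  rw [hF, F_eq d hd N M, if_pos hM]
  have hdvd : (2:ℤ) ∣ M - (N:ℤ) := Int.ModEq.dvd h2
  obtain ⟨c, hc⟩ := hdvd
  have hpar : ((N:ℤ) - M) % 2 = 0 := by
    rw [show (N:ℤ) - M = 2 * (-c) by linarith]
    simp [Int.mul_emod_right]
  unfold g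
  rw [if_pos hpar]
end

section
/- Define for j ≥ 2 and k ≥ 0: P_j(k) = Σ_{i=0}^{⌊j/2⌋} binom(j-2, 2i)·binom(k-i+j-2, j-2) and Q_j(k) = Σ_{i=0}^{⌊j/2⌋} binom(j-2, 2i+1)·binom(k-i+j-2, j-2), where binom(a,b)=0 when b<0, b>a, or a<0. Then Q_{j+1}(k) = Σ_{n=0}^{k} P_j(n) + Σ_{n=0}^{k} Q_j(n). -/
open Finset

/-- Binomial coefficient `binom a b` of integers, equal to `0` when `a < 0`, `b < 0`
or `b > a`. -/
def B (a b : ℤ) : ℤ :=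
  if 0 ≤ a ∧ 0 ≤ b then (a.toNat.choose b.toNat : ℤ) else 0

/-- `P_j(k) = Σ_{i=0}^{⌊j/2⌋} binom(j-2, 2i) · binom(k-i+j-2, j-2)`. -/
def P (j : ℕ) (k : ℤ) : ℤ :=
  ∑ i ∈ Finset.range (j / 2 + 1),
    B ((j : ℤ) - 2) (2 * i) * B (k - i + j - 2) ((j : ℤ) - 2)

/-- `Q_j(k) = Σ_{i=0}^{⌊j/2⌋} binom(j-2, 2i+1) · binom(k-i+j-2, j-2)`. -/
def Q (j : ℕ) (k : ℤ) : ℤ :=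
  ∑ i ∈ Finset.range (j / 2 + 1),
    B ((j : ℤ) - 2) (2 * i + 1) * B (k - i + j - 2) ((j : ℤ) - 2)

lemma B_pascal (a b : ℤ) (hb : 0 ≤ b) : B (a + 1) (b + 1) = B a b + B a (b + 1) := by
  unfold B
  by_cases ha : 0 ≤ a
  · have h1 : (a + 1).toNat = a.toNat + 1 := by omega
    have h2 : (b + 1).toNat = b.toNat + 1 := by omega
    simp only [ha, hb, show (0:ℤ) ≤ a + 1 by omega, show (0:ℤ) ≤ b + 1 by omega,
      and_self, if_true, true_and, if_pos]
    rw [h1, h2, Nat.choose_succ_succ]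
    push_cast
    ring
  · rcases lt_or_ge (a + 1) 0 with h | h
    · simp [ha, show ¬ (0:ℤ) ≤ a + 1 by omega]
    · have ha0 : a + 1 = 0 := by omega
      have h2 : (b + 1).toNat = b.toNat + 1 := by omega
      simp [ha, ha0, h2]

lemma B_eq_zero_of_lt (a b : ℤ) (h : a < b) : B a b = 0 := by
  unfold B
  split_ifs with hh
  · rw [Nat.choose_eq_zero_of_lt (by omega)]
    simp
  · rfl

lemma hockey (r : ℤ) (hr : 0 ≤ r) (c : ℤ) (k : ℤ) (hk : 0 ≤ k) :
    ∑ n ∈ Finset.Icc (0 : ℤ) k, B (n + c) r = B (k + c + 1) (r + 1) - B c (r + 1) := by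
  refine Int.le_induction (motive := fun k _ => ∑ n ∈ Finset.Icc (0:ℤ) k, B (n + c) r = B (k + c + 1) (r + 1) - B c (r + 1)) ?_ ?_ k hk
  · show ∑ n ∈ Finset.Icc (0:ℤ) 0, B (n + c) r = B (0 + c + 1) (r + 1) - B c (r + 1)
    rw [show Finset.Icc (0:ℤ) 0 = {0} from rfl, Finset.sum_singleton]
    have h := B_pascal c r hr
    simp only [zero_add]
    linarith [h]
  · intro m hm ih
    rw [show Finset.Icc (0:ℤ) (m+1) = insert (m+1) (Finset.Icc 0 m) by
        ext x; simp; omega,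
      Finset.sum_insert (by simp), ih]
    have hp := B_pascal (m + c + 1) r hr
    rw [show m + 1 + c = m + c + 1 by ring]
    linarith [hp]

/-- The recurrence `Q_{j+1}(k) = Σ_{n=0}^{k} P_j(n) + Σ_{n=0}^{k} Q_j(n)`. -/
theorem Q_recurrence (j : ℕ) (k : ℤ) (hj : 2 ≤ j) (hk : 0 ≤ k) :
    Q (j + 1) k = (∑ n ∈ Finset.Icc (0 : ℤ) k, P j n) + ∑ n ∈ Finset.Icc (0 : ℤ) k, Q j n := by
  have hj2 : (0:ℤ) ≤ (j:ℤ) - 2 := by omega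
  -- sum over n of the inner binomial, for each i
  have hsum : ∀ i : ℕ, ∑ n ∈ Finset.Icc (0 : ℤ) k, B (n - i + j - 2) ((j:ℤ) - 2)
      = B (k - i + j - 1) ((j:ℤ) - 1) := by
    intro i
    have h := hockey ((j:ℤ) - 2) hj2 (-(i:ℤ) + j - 2) k hk
    have hz : B (-(i:ℤ) + j - 2) ((j:ℤ) - 2 + 1) = 0 :=
      B_eq_zero_of_lt _ _ (by have : (0:ℤ) ≤ (i:ℤ) := Int.natCast_nonneg i; omega)
    calc ∑ n ∈ Finset.Icc (0 : ℤ) k, B (n - i + j - 2) ((j:ℤ) - 2)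
        = ∑ n ∈ Finset.Icc (0 : ℤ) k, B (n + (-(i:ℤ) + j - 2)) ((j:ℤ) - 2) := by
          apply Finset.sum_congr rfl; intro n _; ring_nf
      _ = B (k + (-(i:ℤ) + j - 2) + 1) ((j:ℤ) - 2 + 1) - B (-(i:ℤ) + j - 2) ((j:ℤ) - 2 + 1) := h
      _ = B (k - i + j - 1) ((j:ℤ) - 1) := by rw [hz]; ring_nf
  -- RHS
  have hrhs : (∑ n ∈ Finset.Icc (0 : ℤ) k, P j n) + ∑ n ∈ Finset.Icc (0 : ℤ) k, Q j n
      = ∑ i ∈ Finset.range (j / 2 + 1), B ((j:ℤ) - 1) (2 * i + 1) * B (k - i + j - 1) ((j:ℤ) - 1) := by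
    rw [← Finset.sum_add_distrib]
    have step : ∀ n : ℤ, P j n + Q j n
        = ∑ i ∈ Finset.range (j / 2 + 1), B ((j:ℤ) - 1) (2 * i + 1) * B (n - i + j - 2) ((j:ℤ) - 2) := by
      intro n
      unfold P Q
      rw [← Finset.sum_add_distrib]
      apply Finset.sum_congr rfl
      intro i _
      rw [← add_mul]
      congr 1
      have := B_pascal ((j:ℤ) - 2) (2 * i) (by positivity)
      rw [show (j:ℤ) - 1 = (j:ℤ) - 2 + 1 by ring, this]
    calc ∑ n ∈ Finset.Icc (0 : ℤ) k, (P j n + Q j n)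
        = ∑ n ∈ Finset.Icc (0 : ℤ) k, ∑ i ∈ Finset.range (j / 2 + 1),
            B ((j:ℤ) - 1) (2 * i + 1) * B (n - i + j - 2) ((j:ℤ) - 2) := by
          exact Finset.sum_congr rfl fun n _ => step n
      _ = ∑ i ∈ Finset.range (j / 2 + 1), ∑ n ∈ Finset.Icc (0 : ℤ) k,
            B ((j:ℤ) - 1) (2 * i + 1) * B (n - i + j - 2) ((j:ℤ) - 2) := Finset.sum_comm
      _ = ∑ i ∈ Finset.range (j / 2 + 1), B ((j:ℤ) - 1) (2 * i + 1) * B (k - i + j - 1) ((j:ℤ) - 1) := by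
          apply Finset.sum_congr rfl
          intro i _
          rw [← Finset.mul_sum, hsum i]
  rw [hrhs]
  -- LHS
  unfold Q
  have hcast : ((j + 1 : ℕ) : ℤ) - 2 = (j:ℤ) - 1 := by push_cast; ring
  have hterm : ∀ i : ℕ, B (((j+1:ℕ):ℤ) - 2) (2 * i + 1) * B (k - i + (j+1:ℕ) - 2) (((j+1:ℕ):ℤ) - 2)
      = B ((j:ℤ) - 1) (2 * i + 1) * B (k - i + j - 1) ((j:ℤ) - 1) := by
    intro i
    rw [hcast]
    congr 2
    push_cast; ring
  rw [Finset.sum_congr rfl fun i _ => hterm i]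
  symm
  apply Finset.sum_subset
  · apply Finset.range_subset_range.mpr; omega
  · intro i _ hi
    simp only [Finset.mem_range, not_lt] at hi
    have : (j:ℤ) - 1 < 2 * i + 1 := by
      have : j / 2 + 1 ≤ i := hi
      have h2 : j ≤ 2 * (j / 2) + 1 := by omega
      omega
    rw [B_eq_zero_of_lt _ _ this, zero_mul]
end
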